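/- Let φ₁, φ₂, φ₃ be real numbers with φ₁ + φ₂ + φ₃ = 0 and exp(iφ₂) ≠ exp(iφ₃) (so (exp(iφ₁), exp(iφ₂), exp(iφ₃)) is an amenable triple with distinct second and third vertices). Then the altitude line of the triangle through the vertex exp(iφ₁), namely {exp(iφ₁) + t·i·(exp(iφ₂) − exp(iφ₃)) : t ∈ ℝ}, is equal as a set to the tangent line {2λ·exp(−iφ₁/2) + exp(iφ₁) : λ ∈ ℝ} of the standard deltoid (the tangent line parameterized as 2λ·exp(iθ) + exp(−2iθ) with θ = −φ₁/2). In particular each altitude line of an amenable triangle is a tangent line of the deltoid. -/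
import Mathlib


open Complex ComplexConjugate

/-- `Q z = z²·conj(z)² − 4(z³ + conj(z)³) + 18·z·conj(z) − 27`;
the standard deltoid is `{z : ℂ | Q z = 0}`, and for fixed `θ` the set
`{2λ·exp(iθ) + exp(−2iθ) : λ ∈ ℝ}` is a tangent line of the deltoid. -/
noncomputable def Q (z : ℂ) : ℂ :=
  z ^ 2 * (conj z) ^ 2 - 4 * (z ^ 3 + (conj z) ^ 3) + 18 * z * conj z - 27

/-- The altitude line through the vertex `exp(iφ₁)` of an amenable triangle equals the
tangent line of the deltoid parameterized as `2λ·exp(iθ) + exp(−2iθ)` with `θ = −φ₁/2`. -/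
theorem altitude_is_tangent_line (φ₁ φ₂ φ₃ : ℝ)
    (hsum : φ₁ + φ₂ + φ₃ = 0)
    (hne : exp (I * φ₂) ≠ exp (I * φ₃)) :
    {z : ℂ | ∃ t : ℝ, z = exp (I * φ₁) + (t : ℂ) * (I * (exp (I * φ₂) - exp (I * φ₃)))} =
      {z : ℂ | ∃ lam : ℝ, z = 2 * (lam : ℂ) * exp (-I * φ₁ / 2) + exp (I * φ₁)} := by
  set c : ℝ := -2 * Real.sin ((φ₂ - φ₃) / 2) with hc
  have hsC : (φ₁ : ℂ) + φ₂ + φ₃ = 0 := by exact_mod_cast congrArg (Complex.ofReal) hsum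
  have e2 : I * (φ₂ : ℂ) = -I * φ₁ / 2 + (((φ₂ - φ₃) / 2 : ℝ) : ℂ) * I := by
    push_cast; linear_combination (I / 2) * hsC
  have e3 : I * (φ₃ : ℂ) = -I * φ₁ / 2 + ((-((φ₂ - φ₃) / 2) : ℝ) : ℂ) * I := by
    push_cast; linear_combination (I / 2) * hsC
  have key : I * (exp (I * φ₂) - exp (I * φ₃)) = (c : ℂ) * exp (-I * φ₁ / 2) := by
    rw [e2, e3, Complex.exp_add, Complex.exp_add, Complex.exp_mul_I, Complex.exp_mul_I,
      ← Complex.ofReal_cos, ← Complex.ofReal_cos, ← Complex.ofReal_sin, ← Complex.ofReal_sin, hc]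
    push_cast [Real.cos_neg, Real.sin_neg]
    ring_nf
    rw [Complex.I_sq]
    ring
  have hcne : (c : ℂ) ≠ 0 := by
    intro h
    apply hne
    have := key
    rw [h, zero_mul] at this
    have h2 : exp (I * φ₂) - exp (I * φ₃) = 0 := by
      have := congrArg (fun w => -I * w) this
      simpa [mul_assoc, ← mul_assoc, Complex.I_mul_I] using this
    exact sub_eq_zero.mp h2
  ext z
  simp only [Set.mem_setOf_eq]
  constructor
  · rintro ⟨t, rfl⟩
    exact ⟨t * c / 2, by rw [key]; push_cast; ring⟩
  · rintro ⟨lam, rfl⟩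
    refine ⟨2 * lam / c, ?_⟩
    rw [key]
    have hcne' : c ≠ 0 := fun h => hcne (by exact_mod_cast congrArg Complex.ofReal h)
    push_cast
    field_simp
    ring
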